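/- There is a universal constant C such that the following holds. Let f(x) = ∑_{S ⊆ [n], |S| ≤ k} a_S ∏_{i∈S} x_i be an n-variate multilinear polynomial of degree at most k with coefficients a_S in a separable Banach space, and let x, y, z be independent n-dimensional standard Gaussian random vectors (i.i.d. N(0,1) coordinates). Then for all t > 0, Pr[‖f˘(y,z)‖ > C·k·t] ≤ C·k · Pr[‖f(x)‖ > t]. -/

import Mathlib

open Finset MeasureTheory ProbabilityTheory

/-- Evaluation of the multilinear polynomial with Banach-space coefficients `a` at `x`. -/
noncomputable def evalPolyE {n : ℕ} {E : Type*} [NormedAddCommGroup E] [NormedSpace ℝ E]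
    (a : Finset (Fin n) → E) (x : Fin n → ℝ) : E :=
  ∑ S : Finset (Fin n), (∏ i ∈ S, x i) • a S

/-- One-block decoupled version `f˘(y,z) = ∑_S a_S ∑_{i∈S} y_i ∏_{j∈S∖i} z_j`. -/
noncomputable def odecE {n : ℕ} {E : Type*} [NormedAddCommGroup E] [NormedSpace ℝ E]
    (a : Finset (Fin n) → E) (y z : Fin n → ℝ) : E :=
  ∑ S : Finset (Fin n), (∑ i ∈ S, y i * ∏ j ∈ S.erase i, z j) • a S

/-- Standard Gaussian measure on `ℝⁿ` (i.i.d. `N(0,1)` coordinates). -/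
noncomputable def gaussPi (n : ℕ) : Measure (Fin n → ℝ) :=
  Measure.pi fun _ => gaussianReal 0 1

open Complex
open scoped NNReal ENNReal

namespace Dec

noncomputable def th (k j : ℕ) : ℝ := (2*j+1) * Real.pi / (2*k)
noncomputable def ze (k j : ℕ) : ℂ := Complex.exp ((th k j : ℝ) * I)
noncomputable def cf (k j : ℕ) : ℝ := (-1)^j / (2*k*(1 - Real.cos (th k j)))

variable {k : ℕ}

lemma ze_ne_zero (j : ℕ) : ze k j ≠ 0 := Complex.exp_ne_zero _

lemma ze_pow_two_k (hk : 0 < k) (j : ℕ) : ze k j ^ (2*k) = -1 := by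
  rw [ze, ← Complex.exp_nat_mul]
  have hknz : ((2*k : ℕ) : ℂ) ≠ 0 := Nat.cast_ne_zero.mpr (by omega)
  have : ((2*k : ℕ) : ℂ) * ((th k j : ℝ) * I) = ((2*j+1 : ℕ) : ℂ) * (Real.pi * I) := by
    rw [th]; push_cast
    have h2 : (2:ℂ)*k ≠ 0 := by
      simp only [ne_eq, mul_eq_zero, OfNat.ofNat_ne_zero, Nat.cast_eq_zero, false_or]
      exact hk.ne'
    have hk' : (k:ℂ) ≠ 0 := by exact_mod_cast hk.ne'
    field_simp
  rw [this, Complex.exp_nat_mul]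
  simp [Complex.exp_pi_mul_I]
  exact Odd.neg_one_pow ⟨j, by ring⟩

lemma ze_ne_one (hk : 0 < k) (j : ℕ) : ze k j ≠ 1 := by
  intro h
  have := ze_pow_two_k hk j
  rw [h, one_pow] at this
  norm_num at this

lemma ze_pow_k (hk : 0 < k) (j : ℕ) : ze k j ^ k = I * (-1)^j := by
  rw [ze, ← Complex.exp_nat_mul]
  have : (k : ℂ) * ((th k j : ℝ) * I) = ((j:ℂ) * (Real.pi * I)) + (Real.pi/2) * I := by
    rw [th]; push_cast
    have hknz : (k:ℂ) ≠ 0 := by exact_mod_cast hk.ne'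
    field_simp
  rw [this, Complex.exp_add]
  have h1 : Complex.exp ((j:ℂ) * (Real.pi * I)) = (-1)^j := by
    rw [Complex.exp_nat_mul, Complex.exp_pi_mul_I]
  have h2 : Complex.exp ((Real.pi/2 : ℂ) * I) = I := by
    rw [Complex.exp_mul_I]
    push_cast
    rw [← Complex.ofReal_ofNat, ← Complex.ofReal_div, ← Complex.ofReal_cos, ← Complex.ofReal_sin,
      Real.cos_pi_div_two, Real.sin_pi_div_two]
    simp
  rw [h1, h2]; ring


lemma ze_cos_sin (j : ℕ) : ze k j = (Real.cos (th k j) : ℂ) + (Real.sin (th k j) : ℂ) * I := by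
  rw [ze, Complex.exp_mul_I, ← Complex.ofReal_cos, ← Complex.ofReal_sin]

lemma cos_lt_one (hk : 0 < k) (j : ℕ) : Real.cos (th k j) < 1 := by
  rcases lt_or_eq_of_le (Real.cos_le_one (th k j)) with h | h
  · exact h
  · exfalso
    have hs : Real.sin (th k j) = 0 := by
      have := Real.sin_sq_add_cos_sq (th k j)
      nlinarith
    have := ze_ne_one hk j
    rw [ze_cos_sin, h, hs] at this
    simp at this

lemma cf_pos_part (hk : 0 < k) (j : ℕ) : 0 < 2*(k:ℝ)*(1 - Real.cos (th k j)) := by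
  have := cos_lt_one hk j
  have : (0:ℝ) < 1 - Real.cos (th k j) := by linarith
  positivity

lemma abs_cf (hk : 0 < k) (j : ℕ) : |cf k j| = (-1)^j * cf k j := by
  rcases Nat.even_or_odd j with h | h
  · rw [h.neg_one_pow, one_mul, abs_of_pos]
    rw [cf, h.neg_one_pow]
    exact div_pos one_pos (cf_pos_part hk j)
  · rw [h.neg_one_pow, neg_one_mul, abs_of_neg]
    rw [cf, h.neg_one_pow]
    exact div_neg_of_neg_of_pos (by norm_num) (cf_pos_part hk j)

lemma cos_complex (j : ℕ) : (Real.cos (th k j) : ℂ) = (ze k j + (ze k j)⁻¹) / 2 := by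
  rw [Complex.ofReal_cos, Complex.cos, ze, ← Complex.exp_neg]
  ring_nf

lemma sin_complex (j : ℕ) : (Real.sin (th k j) : ℂ) = (ze k j - (ze k j)⁻¹) / (2*I) := by
  rw [Complex.ofReal_sin, Complex.sin, ze, ← Complex.exp_neg]
  field_simp
  linear_combination (Complex.exp (-(↑(th k j) * I)) - Complex.exp ((↑(th k j) * I))) * Complex.I_sq

lemma cf_complex (hk : 0 < k) (j : ℕ) :
    (cf k j : ℂ) = I * ze k j ^ (k+1) / (k * (1 - ze k j)^2) := by
  have hz0 := ze_ne_zero (k := k) j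
  have hz1 : (1:ℂ) - ze k j ≠ 0 := by
    intro h
    exact ze_ne_one hk j (by linear_combination -h)
  have hknz : (k:ℂ) ≠ 0 := Nat.cast_ne_zero.mpr hk.ne'
  have hcos : (1:ℂ) - (Real.cos (th k j) : ℂ) = -(1 - ze k j)^2 / (2 * ze k j) := by
    rw [cos_complex, inv_eq_one_div]
    field_simp
    ring
  have hden : (2*(k:ℝ)*(1 - Real.cos (th k j))) ≠ 0 := (cf_pos_part hk j).ne'
  rw [cf, Complex.ofReal_div, Complex.ofReal_pow, Complex.ofReal_neg, Complex.ofReal_one,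
    Complex.ofReal_mul, Complex.ofReal_sub, Complex.ofReal_one, Complex.ofReal_mul,
    Complex.ofReal_natCast, Complex.ofReal_ofNat, hcos]
  have hm1 : ((-1 : ℂ))^j = -I * ze k j ^ k := by
    rw [ze_pow_k hk]; ring_nf; simp [I_sq]
  rw [hm1]
  field_simp
  ring


lemma ze_pow_eq (hk : 0 < k) (j s : ℕ) :
    ze k j ^ s = Complex.exp ((s:ℂ)*Real.pi/(2*k) * I) * (Complex.exp ((s:ℂ)*Real.pi/k * I))^j := by
  rw [ze, ← Complex.exp_nat_mul, ← Complex.exp_nat_mul, ← Complex.exp_add]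
  congr 1
  rw [th]
  have hknz : (k:ℂ) ≠ 0 := Nat.cast_ne_zero.mpr hk.ne'
  push_cast
  field_simp
  ring

lemma pow_sum_eq_zero (hk : 0 < k) {s : ℕ} (hs1 : 1 ≤ s) (hs2 : s < 2*k) :
    ∑ j ∈ range (2*k), ze k j ^ s = 0 := by
  have hknz : (k:ℂ) ≠ 0 := Nat.cast_ne_zero.mpr hk.ne'
  set q : ℂ := Complex.exp ((s:ℂ)*Real.pi/k * I) with hq_def
  have hq : q ≠ 1 := by
    intro hq1
    rw [hq_def, Complex.exp_eq_one_iff] at hq1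
    obtain ⟨m, hm⟩ := hq1
    have hm' : ((s:ℂ)*Real.pi/k) * I = ((m:ℂ) * (2*Real.pi)) * I := by linear_combination hm
    have hI : ((s:ℂ)*Real.pi/k) = (m:ℂ) * (2*Real.pi) := mul_right_cancel₀ Complex.I_ne_zero hm'
    have hreal : (s:ℝ)*Real.pi/k = m * (2*Real.pi) := by exact_mod_cast hI
    have hpi := Real.pi_ne_zero
    have hkr : (k:ℝ) ≠ 0 := Nat.cast_ne_zero.mpr hk.ne'
    have hs : (s:ℝ) = m * (2*k) := by
      have h2 : (s:ℝ) * Real.pi = ((m:ℝ) * (2*(k:ℝ))) * Real.pi := by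
        field_simp at hreal
        linear_combination Real.pi * hreal
      exact mul_right_cancel₀ hpi h2
    have hsz : (s:ℤ) = m * (2*k) := by exact_mod_cast hs
    have hkz : (1:ℤ) ≤ (k:ℤ) := by exact_mod_cast hk
    have hs1z : (1:ℤ) ≤ (s:ℤ) := by exact_mod_cast hs1
    have hs2z : (s:ℤ) < 2*(k:ℤ) := by exact_mod_cast hs2
    rcases le_or_gt m 0 with h | h
    · nlinarith
    · nlinarith
  have hq2k : q ^ (2*k) = 1 := by
    rw [hq_def, ← Complex.exp_nat_mul]
    have : ((2*k : ℕ):ℂ) * ((s:ℂ)*Real.pi/k * I) = (s:ℂ) * (2*Real.pi*I) := by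
      push_cast; field_simp
    rw [this, Complex.exp_nat_mul, Complex.exp_two_pi_mul_I, one_pow]
  calc ∑ j ∈ range (2*k), ze k j ^ s
      = Complex.exp ((s:ℂ)*Real.pi/(2*k) * I) * ∑ j ∈ range (2*k), q^j := by
        rw [mul_sum]; exact Finset.sum_congr rfl fun j _ => ze_pow_eq hk j s
    _ = 0 := by
        rw [geom_sum_eq hq, hq2k]
        simp

lemma th_refl (hk : 0 < k) {j : ℕ} (hj : j < 2*k) :
    th k (2*k-1-j) = 2*Real.pi - th k j := by
  rw [th, th]
  have hc : ((2*k-1-j : ℕ):ℝ) = 2*(k:ℝ) - 1 - j := by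
    rw [Nat.cast_sub (by omega), Nat.cast_sub (by omega)]
    push_cast; ring
  rw [hc]
  have hkr : (k:ℝ) ≠ 0 := Nat.cast_ne_zero.mpr hk.ne'
  field_simp
  ring

lemma ze_refl (hk : 0 < k) {j : ℕ} (hj : j < 2*k) :
    ze k (2*k-1-j) = (ze k j)⁻¹ := by
  rw [ze, ze, th_refl hk hj, ← Complex.exp_neg]
  rw [show ((2*Real.pi - th k j : ℝ):ℂ) * I = 2*Real.pi*I + -((th k j :ℝ) * I) by push_cast; ring]
  rw [Complex.exp_add, Complex.exp_two_pi_mul_I, one_mul]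

lemma cf_refl (hk : 0 < k) {j : ℕ} (hj : j < 2*k) :
    cf k (2*k-1-j) = -cf k j := by
  rw [cf, cf, th_refl hk hj]
  rw [show 2*Real.pi - th k j = -(th k j) + 2*Real.pi by ring]
  rw [Real.cos_add_two_pi, Real.cos_neg]
  have hpar : ((-1:ℝ))^(2*k-1-j) = -(-1)^j := by
    rcases Nat.even_or_odd j with h | h
    · rw [h.neg_one_pow, Odd.neg_one_pow (by rw [Nat.odd_iff] at *; rw [Nat.even_iff] at h; omega)]
    · rw [h.neg_one_pow, Even.neg_one_pow (by rw [Nat.even_iff] at *; rw [Nat.odd_iff] at h; omega)]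
      ring
  rw [hpar]
  ring

lemma one_sub_ze_ne_zero (hk : 0 < k) (j : ℕ) : (1:ℂ) - ze k j ≠ 0 := by
  intro h
  exact ze_ne_one hk j (by linear_combination -h)

lemma U0 (hk : 0 < k) : ∑ j ∈ range (2*k), (1 - ze k j)⁻¹ = (k:ℂ) := by
  have key : ∀ j ∈ range (2*k), (1 - ze k (2*k-1-j))⁻¹ = 1 - (1 - ze k j)⁻¹ := by
    intro j hj
    rw [mem_range] at hj
    rw [ze_refl hk hj]
    have h0 := ze_ne_zero (k := k) j
    have h1 := one_sub_ze_ne_zero hk j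
    have h1' : 1 - (ze k j)⁻¹ ≠ 0 := by
      intro h
      apply ze_ne_one hk j
      field_simp at h
      linear_combination h
    have h2 : (-1:ℂ) + ze k j ≠ 0 := fun h => h1 (by linear_combination -h)
    field_simp [h2]
    linear_combination (-(ze k j)) * mul_inv_cancel₀ h2
  have hrefl := Finset.sum_range_reflect (fun j => (1 - ze k j)⁻¹) (2*k)
  have : ∑ j ∈ range (2*k), (1 - ze k j)⁻¹
      = ∑ j ∈ range (2*k), (1 - (1 - ze k j)⁻¹) := by
    rw [← hrefl]
    exact Finset.sum_congr rfl key
  rw [Finset.sum_sub_distrib, Finset.sum_const, card_range] at this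
  have h2 : (2:ℂ) * ∑ j ∈ range (2*k), (1 - ze k j)⁻¹ = 2*k := by
    push_cast at this ⊢
    linear_combination this
  have := mul_left_cancel₀ (two_ne_zero (α := ℂ)) (h2.trans (by push_cast; ring))
  exact this

lemma Usum (hk : 0 < k) {s : ℕ} (hs1 : 1 ≤ s) (hs2 : s ≤ 2*k) :
    ∑ j ∈ range (2*k), ze k j ^ s * (1 - ze k j)⁻¹ = -(k:ℂ) := by
  have key : ∀ j, ze k j ^ s * (1 - ze k j)⁻¹
      = (1 - ze k j)⁻¹ - ∑ t ∈ range s, ze k j ^ t := by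
    intro j
    have h1 := one_sub_ze_ne_zero hk j
    have hgeo := geom_sum_mul (ze k j) s
    field_simp
    linear_combination -hgeo
  simp_rw [key]
  rw [Finset.sum_sub_distrib, U0 hk, Finset.sum_comm]
  have : ∑ t ∈ range s, ∑ j ∈ range (2*k), ze k j ^ t = 2*k := by
    rw [Finset.sum_eq_single 0]
    · simp
    · intro t ht ht0
      rw [mem_range] at ht
      exact pow_sum_eq_zero hk (by omega) (by omega)
    · intro h
      simp at h
      omega
  rw [this]
  push_cast
  ring


noncomputable def Mf (k s : ℕ) : ℂ := ∑ j ∈ range (2*k), (cf k j : ℂ) * ze k j ^ s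

lemma sum_cf (hk : 0 < k) : ∑ j ∈ range (2*k), cf k j = 0 := by
  have hrefl := Finset.sum_range_reflect (fun j => cf k j) (2*k)
  have : ∑ j ∈ range (2*k), cf k j = - ∑ j ∈ range (2*k), cf k j := by
    conv_lhs => rw [← hrefl]
    rw [← Finset.sum_neg_distrib]
    refine Finset.sum_congr rfl fun j hj => ?_
    rw [mem_range] at hj
    exact cf_refl hk hj
  linarith

lemma Mf_zero (hk : 0 < k) : Mf k 0 = 0 := by
  have := sum_cf hk
  simp only [Mf, pow_zero, mul_one]
  rw [← Complex.ofReal_sum, this, Complex.ofReal_zero]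

lemma Mf_two_k (hk : 0 < k) : Mf k (2*k) = 0 := by
  simp only [Mf]
  have : ∀ j ∈ range (2*k), (cf k j : ℂ) * ze k j ^ (2*k) = -(cf k j : ℂ) := by
    intro j _
    rw [ze_pow_two_k hk]
    ring
  rw [Finset.sum_congr rfl this, Finset.sum_neg_distrib, ← Complex.ofReal_sum, sum_cf hk]
  simp

lemma Mf_step (hk : 0 < k) {s : ℕ} (h1 : k ≤ s) (h2 : s + 1 ≤ 3*k) :
    Mf k s = Mf k (s+1) + I := by
  have hknz : (k:ℂ) ≠ 0 := Nat.cast_ne_zero.mpr hk.ne'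
  have key : ∀ j ∈ range (2*k), (cf k j : ℂ) * ze k j ^ s - (cf k j : ℂ) * ze k j ^ (s+1)
      = -(I * (k:ℂ)⁻¹) * (ze k j ^ (s+1-k) * (1 - ze k j)⁻¹) := by
    intro j _
    have h0 := ze_ne_zero (k := k) j
    have hone := one_sub_ze_ne_zero hk j
    have hpow : ze k j ^ (k+1) * ze k j ^ s = -(ze k j ^ (s+1-k)) := by
      rw [← pow_add, show k+1+s = 2*k + (s+1-k) by omega, pow_add, ze_pow_two_k hk]
      ring
    have rel1 := mul_inv_cancel₀ hone
    rw [cf_complex hk, div_eq_mul_inv, mul_inv, sq (1 - ze k j), mul_inv]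
    linear_combination (I * (k:ℂ)⁻¹ * (1 - ze k j)⁻¹ * (1 - ze k j)⁻¹ * (1 - ze k j)) * hpow
      - (I * (k:ℂ)⁻¹ * (1 - ze k j)⁻¹ * ze k j ^ (s+1-k)) * rel1
  have hsum : Mf k s - Mf k (s+1) = -(I * (k:ℂ)⁻¹) *
      ∑ j ∈ range (2*k), ze k j ^ (s+1-k) * (1 - ze k j)⁻¹ := by
    rw [Mf, Mf, ← Finset.sum_sub_distrib, Finset.sum_congr rfl key, ← Finset.mul_sum]
  rw [Usum hk (by omega) (by omega)] at hsum
  have : Mf k s - Mf k (s+1) = I := by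
    rw [hsum]
    field_simp
  linear_combination this

lemma Mf_up (hk : 0 < k) : ∀ r, r ≤ k → Mf k (2*k + r) = -I * r := by
  intro r
  induction r with
  | zero => intro _; simpa using Mf_two_k hk
  | succ m ih =>
    intro hm
    have h := Mf_step hk (s := 2*k + m) (by omega) (by omega)
    have := ih (by omega)
    rw [show 2*k + (m+1) = (2*k + m) + 1 by omega]
    push_cast
    have h2 : Mf k (2*k+m+1) = Mf k (2*k+m) - I := by linear_combination -h
    rw [h2, this]
    push_cast
    ring

lemma Mf_down (hk : 0 < k) : ∀ r, r ≤ k → Mf k (2*k - r) = I * r := by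
  intro r
  induction r with
  | zero => intro _; simpa using Mf_two_k hk
  | succ m ih =>
    intro hm
    have h := Mf_step hk (s := 2*k - (m+1)) (by omega) (by omega)
    rw [show 2*k - (m+1) + 1 = 2*k - m by omega] at h
    rw [h, ih (by omega)]
    push_cast
    ring

lemma Mf_val (hk : 0 < k) {s : ℕ} (h1 : k ≤ s) (h2 : s ≤ 3*k) :
    Mf k s = I * ((2*k : ℂ) - s) := by
  rcases le_or_gt s (2*k) with h | h
  · have := Mf_down hk (2*k - s) (by omega)
    rw [show 2*k - (2*k - s) = s by omega] at this
    rw [this, Nat.cast_sub h]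
    push_cast
    ring
  · have := Mf_up hk (s - 2*k) (by omega)
    rw [show 2*k + (s - 2*k) = s by omega] at this
    rw [this, Nat.cast_sub (by omega : 2*k ≤ s)]
    push_cast
    ring


lemma S1sum (n : ℕ) : ∑ p ∈ range (n+1), (n.choose p : ℂ) * (-1)^(n-p) = if n = 0 then 1 else 0 := by
  have h := add_pow (1:ℂ) (-1) n
  rw [show (1:ℂ) + (-1) = 0 by ring] at h
  rw [zero_pow_eq] at h
  rw [h]
  refine Finset.sum_congr rfl fun p _ => ?_
  ring

lemma T2sum (n : ℕ) : ∑ p ∈ range (n+1), (n.choose p : ℂ) * (-1)^(n-p) * p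
    = if n = 1 then 1 else 0 := by
  cases n with
  | zero => simp
  | succ m =>
    rw [Finset.sum_range_succ']
    simp only [Nat.cast_zero, mul_zero, add_zero]
    push_cast
    have key : ∀ p, ((m+1).choose (p+1) : ℂ) * (-1)^(m-p) * ((p:ℂ)+1)
        = ((m+1):ℂ) * ((m.choose p : ℂ) * (-1)^(m-p)) := by
      intro p
      have hn := Nat.add_one_mul_choose_eq m p
      have hc : ((m+1).choose (p+1) : ℂ) * ((p:ℂ)+1) = ((m+1):ℂ) * (m.choose p : ℂ) := by
        exact_mod_cast congrArg (Nat.cast : ℕ → ℂ) hn.symm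
      linear_combination ((-1:ℂ))^(m-p) * hc
    rw [Finset.sum_congr rfl fun p (_ : p ∈ range (m+1)) => key p, ← Finset.mul_sum, S1sum]
    rcases Nat.eq_zero_or_pos m with h | h
    · simp [h]
    · rw [if_neg h.ne']
      ring

lemma T1sum (n : ℕ) : ∑ p ∈ range (n+1), (n.choose p : ℂ) * (-1)^(n-p) * ((n:ℂ) - p)
    = if n = 1 then -1 else 0 := by
  have hrefl := Finset.sum_range_reflect
    (fun p => (n.choose p : ℂ) * (-1)^(n-p) * ((n:ℂ) - p)) (n+1)
  simp only [Nat.add_sub_cancel] at hrefl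
  rw [← hrefl]
  have key : ∀ p ∈ range (n+1), (n.choose (n-p) : ℂ) * (-1)^(n-(n-p)) * ((n:ℂ) - ((n-p:ℕ):ℂ))
      = ((-1:ℂ))^n * ((n.choose p : ℂ) * (-1)^(n-p) * p) := by
    intro p hp
    rw [mem_range] at hp
    have hpn : p ≤ n := by omega
    rw [Nat.choose_symm hpn, show n - (n-p) = p by omega, Nat.cast_sub hpn]
    have hsign : ((-1:ℂ))^p = (-1)^n * (-1)^(n-p) := by
      rw [← pow_add, show n + (n-p) = p + 2*(n-p) by omega, pow_add, pow_mul]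
      norm_num
    rw [hsign]
    ring
  rw [Finset.sum_congr rfl key, ← Finset.mul_sum, T2sum]
  rcases eq_or_ne n 1 with h | h
  · simp [h]
  · simp [h]

lemma S4sum (n : ℕ) : ∑ p ∈ range (n+1), (n.choose p : ℂ) * (-1)^(n-p) * ((n:ℂ) - 2*p)
    = if n = 1 then -2 else 0 := by
  have : ∀ p ∈ range (n+1), (n.choose p : ℂ) * (-1)^(n-p) * ((n:ℂ) - 2*p)
      = (n.choose p : ℂ) * (-1)^(n-p) * ((n:ℂ) - p) - (n.choose p : ℂ) * (-1)^(n-p) * p := by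
    intro p _; ring
  rw [Finset.sum_congr rfl this, Finset.sum_sub_distrib, T1sum, T2sum]
  rcases eq_or_ne n 1 with h | h
  · simp [h]; norm_num
  · simp [h]

lemma S3sum (n : ℕ) : ∑ q ∈ range (n+1), (n.choose q : ℂ) * ((n:ℂ) - 2*q) = 0 := by
  have hrefl := Finset.sum_range_reflect (fun q => (n.choose q : ℂ) * ((n:ℂ) - 2*q)) (n+1)
  simp only [Nat.add_sub_cancel] at hrefl
  have key : ∀ q ∈ range (n+1), (n.choose (n-q) : ℂ) * ((n:ℂ) - 2*((n-q:ℕ):ℂ))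
      = -((n.choose q : ℂ) * ((n:ℂ) - 2*q)) := by
    intro q hq
    rw [mem_range] at hq
    have hqn : q ≤ n := by omega
    rw [Nat.choose_symm hqn, Nat.cast_sub hqn]
    ring
  have h2 : ∑ q ∈ range (n+1), (n.choose q : ℂ) * ((n:ℂ) - 2*q)
      = -∑ q ∈ range (n+1), (n.choose q : ℂ) * ((n:ℂ) - 2*q) := by
    conv_lhs => rw [← hrefl]
    rw [← Finset.sum_neg_distrib]
    exact Finset.sum_congr rfl key
  have h3 : (2:ℂ) * ∑ q ∈ range (n+1), (n.choose q : ℂ) * ((n:ℂ) - 2*q) = 0 := by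
    linear_combination h2
  exact (mul_eq_zero.mp h3).resolve_left two_ne_zero

lemma S2sum (n : ℕ) : ∑ q ∈ range (n+1), (n.choose q : ℂ) = 2^n := by
  exact_mod_cast congrArg (Nat.cast : ℕ → ℂ) (Nat.sum_range_choose n)

lemma Bsum (m e : ℕ) :
    ∑ p ∈ range (m+1), ∑ q ∈ range (e+1),
      (m.choose p : ℂ) * (-1)^(m-p) * (e.choose q : ℂ) * (((m:ℂ)+e) - 2*p - 2*q)
    = if m = 1 then -2^(e+1) else 0 := by
  have split : ∀ p ∈ range (m+1), ∀ q ∈ range (e+1),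
      (m.choose p : ℂ) * (-1)^(m-p) * (e.choose q : ℂ) * (((m:ℂ)+e) - 2*p - 2*q)
      = ((m.choose p : ℂ) * (-1)^(m-p)) * ((e.choose q : ℂ) * ((e:ℂ) - 2*q))
        + ((m.choose p : ℂ) * (-1)^(m-p) * ((m:ℂ) - 2*p)) * (e.choose q : ℂ) := by
    intro p _ q _; ring
  calc ∑ p ∈ range (m+1), ∑ q ∈ range (e+1),
        (m.choose p : ℂ) * (-1)^(m-p) * (e.choose q : ℂ) * (((m:ℂ)+e) - 2*p - 2*q)
      = (∑ p ∈ range (m+1), (m.choose p : ℂ) * (-1)^(m-p))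
          * (∑ q ∈ range (e+1), (e.choose q : ℂ) * ((e:ℂ) - 2*q))
        + (∑ p ∈ range (m+1), (m.choose p : ℂ) * (-1)^(m-p) * ((m:ℂ) - 2*p))
          * (∑ q ∈ range (e+1), (e.choose q : ℂ)) := by
        rw [Finset.sum_mul_sum, Finset.sum_mul_sum, ← Finset.sum_add_distrib]
        refine Finset.sum_congr rfl fun p hp => ?_
        rw [← Finset.sum_add_distrib]
        exact Finset.sum_congr rfl fun q hq => split p hp q hq
    _ = if m = 1 then -2^(e+1) else 0 := by
        rw [S1sum, S3sum, S4sum, S2sum]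
        rcases eq_or_ne m 1 with h | h
        · simp [h]
          ring
        · simp [h]


lemma neg_one_pow_C (hk : 0 < k) (j : ℕ) : ((-1:ℂ))^j = -I * ze k j ^ k := by
  rw [ze_pow_k hk]
  ring_nf
  simp [I_sq]

lemma lam' (hk : 0 < k) (m e : ℕ) (hme : m + e ≤ k) :
    ∑ j ∈ range (2*k), cf k j * Real.sin (th k j)^m * Real.cos (th k j)^e
    = if m = 1 then 1 else 0 := by
  set g := 2*k - (m+e) with hg
  have keyj : ∀ j ∈ range (2*k),
      (cf k j : ℂ) * (Real.sin (th k j):ℂ)^m * (Real.cos (th k j):ℂ)^e * (2^(m+e) * I^m)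
      = -∑ p ∈ range (m+1), ∑ q ∈ range (e+1),
          (m.choose p : ℂ) * (-1)^(m-p) * (e.choose q : ℂ)
            * ((cf k j : ℂ) * ze k j ^ (g+2*p+2*q)) := by
    intro j _
    have h0 := ze_ne_zero (k := k) j
    have a1 : (Real.sin (th k j):ℂ) * (2*I*ze k j) = ze k j^2 - 1 := by
      rw [sin_complex]
      field_simp
    have a2 : (Real.cos (th k j):ℂ) * (2*ze k j) = ze k j^2 + 1 := by
      rw [cos_complex]
      field_simp
    have hprod : (Real.sin (th k j):ℂ)^m * (Real.cos (th k j):ℂ)^e * (2^(m+e) * I^m)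
        * ze k j ^ (m+e) = (ze k j^2 - 1)^m * (ze k j^2 + 1)^e := by
      rw [← a1, ← a2, mul_pow, mul_pow]
      ring
    have hz2 : ze k j ^ g * ze k j ^ (m+e) = -1 := by
      rw [← pow_add, show g+(m+e) = 2*k by omega, ze_pow_two_k hk]
    have h3 : (Real.sin (th k j):ℂ)^m * (Real.cos (th k j):ℂ)^e * (2^(m+e) * I^m)
        = -((ze k j^2 - 1)^m * (ze k j^2 + 1)^e * ze k j ^ g) := by
      linear_combination ((Real.sin (th k j):ℂ)^m * (Real.cos (th k j):ℂ)^e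
        * (2^(m+e) * I^m)) * hz2 - ze k j ^ g * hprod
    have hPexp : (ze k j^2 - 1)^m * (ze k j^2 + 1)^e
        = ∑ p ∈ range (m+1), ∑ q ∈ range (e+1),
            (m.choose p : ℂ) * (-1)^(m-p) * (e.choose q : ℂ) * ze k j ^ (2*p+2*q) := by
      have e1 : (ze k j^2 - 1)^m
          = ∑ p ∈ range (m+1), (ze k j^2)^p * (-1)^(m-p) * (m.choose p : ℂ) := by
        rw [show ze k j^2 - 1 = ze k j^2 + (-1) by ring, add_pow]
      have e2 : (ze k j^2 + 1)^e
          = ∑ q ∈ range (e+1), (ze k j^2)^q * 1^(e-q) * (e.choose q : ℂ) := by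
        rw [add_pow]
      rw [e1, e2, Finset.sum_mul_sum]
      refine Finset.sum_congr rfl fun p _ => Finset.sum_congr rfl fun q _ => ?_
      rw [one_pow, ← pow_mul, ← pow_mul]
      ring
    calc (cf k j : ℂ) * (Real.sin (th k j):ℂ)^m * (Real.cos (th k j):ℂ)^e * (2^(m+e) * I^m)
        = (cf k j : ℂ) * ((Real.sin (th k j):ℂ)^m * (Real.cos (th k j):ℂ)^e
            * (2^(m+e) * I^m)) := by ring
      _ = (cf k j : ℂ) * -((ze k j^2 - 1)^m * (ze k j^2 + 1)^e * ze k j ^ g) := by rw [h3]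
      _ = -∑ p ∈ range (m+1), ∑ q ∈ range (e+1),
            (m.choose p : ℂ) * (-1)^(m-p) * (e.choose q : ℂ)
              * ((cf k j : ℂ) * ze k j ^ (g+2*p+2*q)) := by
          rw [hPexp, Finset.sum_mul, mul_neg, neg_inj, Finset.mul_sum]
          refine Finset.sum_congr rfl fun p _ => ?_
          rw [Finset.sum_mul, Finset.mul_sum]
          refine Finset.sum_congr rfl fun q _ => ?_
          rw [show g+2*p+2*q = 2*p+2*q+g by omega, pow_add]
          ring
  have total : (∑ j ∈ range (2*k),
        (cf k j : ℂ) * (Real.sin (th k j):ℂ)^m * (Real.cos (th k j):ℂ)^e) * (2^(m+e) * I^m)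
      = -∑ p ∈ range (m+1), ∑ q ∈ range (e+1),
          (m.choose p : ℂ) * (-1)^(m-p) * (e.choose q : ℂ) * Mf k (g+2*p+2*q) := by
    rw [Finset.sum_mul, Finset.sum_congr rfl keyj, Finset.sum_neg_distrib, neg_inj,
      Finset.sum_comm]
    refine Finset.sum_congr rfl fun p _ => ?_
    rw [Finset.sum_comm]
    refine Finset.sum_congr rfl fun q _ => ?_
    rw [Mf, Finset.mul_sum]
  have bounds : ∀ p ∈ range (m+1), ∀ q ∈ range (e+1),
      Mf k (g+2*p+2*q) = I * ((((m:ℂ))+(e:ℂ)) - 2*p - 2*q) := by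
    intro p hp q hq
    rw [mem_range] at hp hq
    rw [Mf_val hk (by omega) (by omega)]
    congr 1
    have hcast : ((g + 2*p + 2*q : ℕ) : ℂ)
        = 2*(k:ℂ) - ((m:ℂ)+(e:ℂ)) + 2*(p:ℂ) + 2*(q:ℂ) := by
      rw [hg]
      push_cast [Nat.cast_sub (show m+e ≤ 2*k by omega)]
      ring
    rw [hcast]
    push_cast
    ring
  rw [Finset.sum_congr rfl (fun p hp => Finset.sum_congr rfl
    (fun q hq => by rw [bounds p hp q hq]))] at total
  have swapI : -∑ p ∈ range (m+1), ∑ q ∈ range (e+1),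
        (m.choose p : ℂ) * (-1)^(m-p) * (e.choose q : ℂ) * (I * ((((m:ℂ))+(e:ℂ)) - 2*p - 2*q))
      = -(I * ∑ p ∈ range (m+1), ∑ q ∈ range (e+1),
          (m.choose p : ℂ) * (-1)^(m-p) * (e.choose q : ℂ) * (((m:ℂ)+e) - 2*p - 2*q)) := by
    rw [neg_inj, Finset.mul_sum]
    refine Finset.sum_congr rfl fun p _ => ?_
    rw [Finset.mul_sum]
    exact Finset.sum_congr rfl fun q _ => by ring
  rw [swapI, Bsum m e] at total
  have hc2 : ((2:ℂ)^(m+e) * I^m) ≠ 0 :=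
    mul_ne_zero (pow_ne_zero _ two_ne_zero) (pow_ne_zero _ I_ne_zero)
  have finalC : ∑ j ∈ range (2*k),
      (cf k j : ℂ) * (Real.sin (th k j):ℂ)^m * (Real.cos (th k j):ℂ)^e
      = if m = 1 then 1 else 0 := by
    rcases eq_or_ne m 1 with h | h
    · rw [if_pos h]
      rw [if_pos h] at total
      refine mul_right_cancel₀ hc2 ?_
      rw [total, one_mul, h]
      ring
    · rw [if_neg h]
      rw [if_neg h] at total
      have h0 : (∑ j ∈ range (2*k),
          (cf k j : ℂ) * (Real.sin (th k j):ℂ)^m * (Real.cos (th k j):ℂ)^e)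
          * (2^(m+e) * I^m) = 0 := by rw [total]; ring
      exact (mul_eq_zero.mp h0).resolve_right hc2
  have cast1 : ((∑ j ∈ range (2*k), cf k j * Real.sin (th k j)^m * Real.cos (th k j)^e : ℝ) : ℂ)
      = ∑ j ∈ range (2*k), (cf k j : ℂ) * (Real.sin (th k j):ℂ)^m * (Real.cos (th k j):ℂ)^e := by
    push_cast [-Complex.ofReal_sin, -Complex.ofReal_cos]
    rfl
  apply Complex.ofReal_injective
  rw [cast1, finalC]
  split <;> simp

lemma csum (hk : 0 < k) : ∑ j ∈ range (2*k), |cf k j| = (k:ℝ) := by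
  have habs : ∀ j ∈ range (2*k), (|cf k j| : ℝ) = (-1)^j * cf k j := fun j _ => abs_cf hk j
  have hC : ((∑ j ∈ range (2*k), |cf k j| : ℝ) : ℂ)
      = ∑ j ∈ range (2*k), ((-1:ℂ))^j * (cf k j : ℂ) := by
    rw [Finset.sum_congr rfl habs]
    push_cast
    rfl
  have hM : ∑ j ∈ range (2*k), ((-1:ℂ))^j * (cf k j : ℂ) = -I * Mf k k := by
    rw [Mf, Finset.mul_sum]
    refine Finset.sum_congr rfl fun j _ => ?_
    rw [neg_one_pow_C hk]
    ring
  have hval : Mf k k = I * (k:ℂ) := by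
    rw [Mf_val hk le_rfl (by omega)]
    congr 1
    push_cast
    ring
  apply Complex.ofReal_injective
  rw [hC, hM, hval]
  have : -I * (I * (k:ℂ)) = (k:ℂ) := by
    have := Complex.I_sq
    linear_combination -(k:ℂ) * this
  rw [this]
  simp


lemma decouple (hk : 0 < k) {n : ℕ} {E : Type*} [NormedAddCommGroup E] [NormedSpace ℝ E]
    (a : Finset (Fin n) → E) (ha : ∀ S, k < S.card → a S = 0) (y z : Fin n → ℝ) :
    odecE a y z = ∑ j ∈ range (2*k), cf k j •
      evalPolyE a (fun i => Real.sin (th k j) * y i + Real.cos (th k j) * z i) := by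
  unfold odecE evalPolyE
  have step1 : ∀ j, cf k j • ∑ S : Finset (Fin n),
        (∏ i ∈ S, (Real.sin (th k j) * y i + Real.cos (th k j) * z i)) • a S
      = ∑ S : Finset (Fin n),
        (cf k j * ∏ i ∈ S, (Real.sin (th k j) * y i + Real.cos (th k j) * z i)) • a S := by
    intro j
    rw [Finset.smul_sum]
    exact Finset.sum_congr rfl fun S _ => smul_smul _ _ _
  rw [Finset.sum_congr rfl fun j _ => step1 j, Finset.sum_comm]
  refine Finset.sum_congr rfl fun S _ => ?_
  rw [← Finset.sum_smul]
  rcases le_or_gt S.card k with hS | hS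
  swap
  · rw [ha S hS, smul_zero, smul_zero]
  congr 1
  symm
  calc ∑ j ∈ range (2*k), cf k j * ∏ i ∈ S, (Real.sin (th k j) * y i + Real.cos (th k j) * z i)
      = ∑ j ∈ range (2*k), ∑ T ∈ S.powerset,
          (cf k j * Real.sin (th k j) ^ T.card * Real.cos (th k j) ^ (S.card - T.card))
            * ((∏ i ∈ T, y i) * ∏ i ∈ S \ T, z i) := by
        refine Finset.sum_congr rfl fun j _ => ?_
        rw [Finset.prod_add, Finset.mul_sum]
        refine Finset.sum_congr rfl fun T hT => ?_
        rw [mem_powerset] at hT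
        have hy : ∏ i ∈ T, (Real.sin (th k j) * y i)
            = Real.sin (th k j) ^ T.card * ∏ i ∈ T, y i := by
          rw [Finset.prod_mul_distrib, Finset.prod_const]
        have hz : ∏ i ∈ S \ T, (Real.cos (th k j) * z i)
            = Real.cos (th k j) ^ (S.card - T.card) * ∏ i ∈ S \ T, z i := by
          rw [Finset.prod_mul_distrib, Finset.prod_const, Finset.card_sdiff_of_subset hT]
        rw [hy, hz]
        ring
    _ = ∑ T ∈ S.powerset,
          (∑ j ∈ range (2*k), cf k j * Real.sin (th k j) ^ T.card
            * Real.cos (th k j) ^ (S.card - T.card))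
            * ((∏ i ∈ T, y i) * ∏ i ∈ S \ T, z i) := by
        rw [Finset.sum_comm]
        exact Finset.sum_congr rfl fun T _ => by rw [Finset.sum_mul]
    _ = ∑ T ∈ S.powerset, (if T.card = 1 then 1 else 0)
            * ((∏ i ∈ T, y i) * ∏ i ∈ S \ T, z i) := by
        refine Finset.sum_congr rfl fun T hT => ?_
        rw [mem_powerset] at hT
        have hcard := Finset.card_le_card hT
        rw [lam' hk T.card (S.card - T.card) (by omega)]
    _ = ∑ T ∈ S.powerset.filter (fun T => T.card = 1),
            ((∏ i ∈ T, y i) * ∏ i ∈ S \ T, z i) := by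
        rw [Finset.sum_filter]
        exact Finset.sum_congr rfl fun T _ => by split <;> simp
    _ = ∑ i ∈ S, y i * ∏ j ∈ S.erase i, z j := by
        have hps : S.powerset.filter (fun T => T.card = 1) = Finset.powersetCard 1 S := by
          rw [Finset.powersetCard_eq_filter]
        rw [hps, Finset.powersetCard_one, Finset.sum_map]
        refine Finset.sum_congr rfl fun i hi => ?_
        simp only [Function.Embedding.coeFn_mk, Finset.prod_singleton,
          Finset.sdiff_singleton_eq_erase]


section Gauss

open MeasureTheory

lemma key_algebra {s c : ℝ} (h : s^2 + c^2 = 1) (x a : ℝ) :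
    gaussianPDFReal 0 1 x * gaussianPDFReal (s*x) ⟨c^2, sq_nonneg c⟩ a
    = gaussianPDFReal 0 1 a * gaussianPDFReal (s*a) ⟨c^2, sq_nonneg c⟩ x := by
  rcases eq_or_ne c 0 with hc | hc
  · subst hc
    simp [gaussianPDFReal, NNReal.coe_mk, NNReal.toReal, -NNReal.val_eq_coe]
  simp only [gaussianPDFReal]
  simp only [NNReal.coe_mk, NNReal.coe_one]
  simp only [NNReal.toReal]
  have e1 : ∀ (A B u v : ℝ), (A * Real.exp u) * (B * Real.exp v)
      = (A*B) * Real.exp (u+v) := by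
    intros; rw [Real.exp_add]; ring
  rw [e1, e1]
  congr 1
  congr 1
  have hc2 : c^2 ≠ 0 := pow_ne_zero _ hc
  field_simp
  ring_nf
  linear_combination (a^2 - x^2) * h


lemma gauss_conv {s c : ℝ} (h : s^2 + c^2 = 1) (hc : c ≠ 0) {A : Set ℝ} (hA : MeasurableSet A) :
    ∫⁻ x, gaussianReal (s*x) ⟨c^2, sq_nonneg c⟩ A ∂(gaussianReal 0 1) = gaussianReal 0 1 A := by
  set v : ℝ≥0 := ⟨c^2, sq_nonneg c⟩ with hv
  have hv0 : v ≠ 0 := by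
    intro h0
    exact (pow_ne_zero 2 hc) (by simpa [hv] using congrArg Subtype.val h0)
  set G : ℝ × ℝ → ℝ≥0∞ := fun p => gaussianPDF (s*p.1) v p.2 with hGdef
  have hGr : Measurable fun p : ℝ × ℝ => gaussianPDFReal (s*p.1) v p.2 := by
    have : (fun p : ℝ × ℝ => gaussianPDFReal (s*p.1) v p.2)
        = fun p => (√(2*Real.pi*v))⁻¹ * Real.exp (-(p.2 - s*p.1)^2/(2*v)) := by
      funext p; rw [gaussianPDFReal]
    rw [this]
    exact ((((measurable_snd.sub (measurable_fst.const_mul s)).pow_const 2).neg.div_const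
      _).exp.const_mul _)
  have hG : Measurable G := hGr.ennreal_ofReal
  set f2 : ℝ × ℝ → ℝ≥0∞ := fun p => (A.indicator (fun a => G (p.1, a))) p.2 with hf2def
  have hf2eq : f2 = (Set.univ ×ˢ A).indicator G := by
    funext p
    by_cases hp : p.2 ∈ A
    · simp [hf2def, Set.indicator_of_mem hp, Set.indicator_of_mem
        (Set.mem_prod.mpr ⟨Set.mem_univ _, hp⟩)]
    · simp [hf2def, Set.indicator_of_notMem hp,
        Set.indicator_of_notMem (fun hmem => hp (Set.mem_prod.mp hmem).2)]
  have hf2m : Measurable f2 := hf2eq ▸ hG.indicator (MeasurableSet.univ.prod hA)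
  have step0 : ∀ x, gaussianReal (s*x) v A = ∫⁻ a, f2 (x, a) ∂volume := by
    intro x
    rw [gaussianReal_apply _ hv0 A, hf2def]
    exact (lintegral_indicator hA _).symm
  have hFm : Measurable fun x => ∫⁻ a, f2 (x, a) ∂volume := hf2m.lintegral_prod_right'
  have hpoint : ∀ x a, gaussianPDF 0 1 x * f2 (x, a)
      = (A.indicator (gaussianPDF 0 1) a) * gaussianPDF (s*a) v x := by
    intro x a
    by_cases ha : a ∈ A
    · rw [hf2def]
      simp only [Set.indicator_of_mem ha]
      rw [hGdef]
      simp only [gaussianPDF]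
      rw [← ENNReal.ofReal_mul (gaussianPDFReal_nonneg 0 1 x),
        ← ENNReal.ofReal_mul (gaussianPDFReal_nonneg 0 1 a), key_algebra h]
    · simp [hf2def, Set.indicator_of_notMem ha]
  calc ∫⁻ x, gaussianReal (s*x) v A ∂(gaussianReal 0 1)
      = ∫⁻ x, (∫⁻ a, f2 (x, a) ∂volume) ∂(gaussianReal 0 1) := lintegral_congr step0
    _ = ∫⁻ x, gaussianPDF 0 1 x * (∫⁻ a, f2 (x, a) ∂volume) ∂volume := by
        rw [gaussianReal_of_var_ne_zero 0 one_ne_zero,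
          lintegral_withDensity_eq_lintegral_mul _ (measurable_gaussianPDF 0 1) hFm]
        rfl
    _ = ∫⁻ x, (∫⁻ a, gaussianPDF 0 1 x * f2 (x, a) ∂volume) ∂volume := by
        refine lintegral_congr fun x => ?_
        have hslice : Measurable fun a => f2 (x, a) := hf2m.comp measurable_prodMk_left
        rw [lintegral_const_mul _ hslice]
    _ = ∫⁻ a, (∫⁻ x, gaussianPDF 0 1 x * f2 (x, a) ∂volume) ∂volume := by
        refine lintegral_lintegral_swap ?_
        exact ((measurable_gaussianPDF 0 1).comp measurable_fst).mul hf2m |>.aemeasurable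
    _ = ∫⁻ a, (A.indicator (gaussianPDF 0 1) a) * (∫⁻ x, gaussianPDF (s*a) v x ∂volume)
          ∂volume := by
        refine lintegral_congr fun a => ?_
        rw [← lintegral_const_mul _ (measurable_gaussianPDF _ v)]
        exact lintegral_congr fun x => hpoint x a
    _ = ∫⁻ a, A.indicator (gaussianPDF 0 1) a ∂volume := by
        refine lintegral_congr fun a => ?_
        rw [lintegral_gaussianPDF_eq_one _ hv0, mul_one]
    _ = gaussianReal 0 1 A := by
        rw [lintegral_indicator hA, ← gaussianReal_apply 0 one_ne_zero A]

lemma map_affine (s c x : ℝ) :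
    Measure.map (fun y => s*x + c*y) (gaussianReal 0 1)
      = gaussianReal (s*x) (⟨c^2, sq_nonneg c⟩ * 1) := by
  have h1 : (fun y : ℝ => s*x + c*y) = (fun z => s*x + z) ∘ (fun y => c*y) := rfl
  rw [h1, ← Measure.map_map (measurable_const_add _) (measurable_const_mul _),
    gaussianReal_map_const_mul c, gaussianReal_map_const_add]
  norm_num
  exact congrArg _ (mul_one (NNReal.mk (c^2) (sq_nonneg c))).symm

lemma rot1 {s c : ℝ} (h : s^2 + c^2 = 1) :
    Measure.map (fun q : ℝ × ℝ => s * q.1 + c * q.2)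
      ((gaussianReal 0 1).prod (gaussianReal 0 1)) = gaussianReal 0 1 := by
  have hT : Measurable fun q : ℝ × ℝ => s * q.1 + c * q.2 :=
    (measurable_fst.const_mul s).add (measurable_snd.const_mul c)
  rcases eq_or_ne c 0 with hc | hc
  · subst hc
    have hs2 : s^2 = 1 := by nlinarith
    have heq : (fun q : ℝ × ℝ => s * q.1 + 0 * q.2) = (fun t => s * t) ∘ Prod.fst := by
      funext q; simp
    rw [heq, ← Measure.map_map (measurable_const_mul s) measurable_fst, Measure.map_fst_prod]
    simp only [measure_univ, one_smul]
    rw [gaussianReal_map_const_mul s]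
    have hv : (⟨s^2, sq_nonneg s⟩ : ℝ≥0) = 1 := by
      exact NNReal.coe_injective (by simp [hs2, NNReal.toReal])
    rw [show NNReal.mk (s^2) (sq_nonneg s) = 1 from hv]
    norm_num
  · ext A hA
    rw [Measure.map_apply hT hA, Measure.prod_apply (hT hA)]
    have hmapx : ∀ x : ℝ, gaussianReal 0 1 ((fun y => s*x + c*y) ⁻¹' A)
        = gaussianReal (s*x) ⟨c^2, sq_nonneg c⟩ A := by
      intro x
      rw [← Measure.map_apply ((measurable_const_mul c).const_add _) hA, map_affine s c x]
      exact congrArg (fun v => gaussianReal (s*x) v A) (mul_one (NNReal.mk (c^2) (sq_nonneg c)))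
    calc ∫⁻ x, (gaussianReal 0 1) (Prod.mk x ⁻¹' ((fun q : ℝ × ℝ => s*q.1 + c*q.2) ⁻¹' A))
          ∂(gaussianReal 0 1)
        = ∫⁻ x, gaussianReal (s*x) ⟨c^2, sq_nonneg c⟩ A ∂(gaussianReal 0 1) :=
          lintegral_congr fun x => hmapx x
      _ = gaussianReal 0 1 A := gauss_conv h hc hA

lemma rotPi (n : ℕ) {s c : ℝ} (h : s^2 + c^2 = 1) :
    MeasurePreserving (fun p : (Fin n → ℝ) × (Fin n → ℝ) => fun i => s * p.1 i + c * p.2 i)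
      ((gaussPi n).prod (gaussPi n)) (gaussPi n) := by
  have hT : Measurable fun q : ℝ × ℝ => s * q.1 + c * q.2 :=
    (measurable_fst.const_mul s).add (measurable_snd.const_mul c)
  have h1 : MeasurePreserving (MeasurableEquiv.arrowProdEquivProdArrow ℝ ℝ (Fin n))
      (Measure.pi fun _ => (gaussianReal 0 1).prod (gaussianReal 0 1))
      ((gaussPi n).prod (gaussPi n)) :=
    measurePreserving_arrowProdEquivProdArrow ℝ ℝ (Fin n) (fun _ => gaussianReal 0 1)
      (fun _ => gaussianReal 0 1)
  have h2 : MeasurePreserving (fun (v : Fin n → ℝ × ℝ) (i : Fin n) => s * (v i).1 + c * (v i).2)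
      (Measure.pi fun _ => (gaussianReal 0 1).prod (gaussianReal 0 1)) (gaussPi n) :=
    measurePreserving_pi _ _ (fun _ => ⟨hT, rot1 h⟩)
  exact h2.comp (h1.symm (MeasurableEquiv.arrowProdEquivProdArrow ℝ ℝ (Fin n)))

end Gauss

end Dec

open Dec in
theorem stmt4 :
    ∃ C : ℝ, 0 < C ∧
      ∀ (n k : ℕ) (E : Type) [NormedAddCommGroup E] [NormedSpace ℝ E] [CompleteSpace E]
        [SecondCountableTopology E] (a : Finset (Fin n) → E),
        (∀ S : Finset (Fin n), k < S.card → a S = 0) →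
        ∀ t : ℝ, 0 < t →
          ((gaussPi n).prod (gaussPi n)) {p | C * k * t < ‖odecE a p.1 p.2‖}
            ≤ ENNReal.ofReal (C * k) * (gaussPi n) {x | t < ‖evalPolyE a x‖} := by
  refine ⟨2, by norm_num, ?_⟩
  intro n k E _ _ _ _ a ha t ht
  rcases Nat.eq_zero_or_pos k with hk0 | hk
  · subst hk0
    have hodec : ∀ y z : Fin n → ℝ, odecE a y z = 0 := by
      intro y z
      unfold odecE
      refine Finset.sum_eq_zero fun S _ => ?_
      rcases eq_or_ne S ∅ with hS | hS
      · subst hS; simp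
      · rw [ha S (Finset.card_pos.mpr (Finset.nonempty_iff_ne_empty.mpr hS)), smul_zero]
    have hset : {p : (Fin n → ℝ) × (Fin n → ℝ) | 2 * ((0:ℕ):ℝ) * t < ‖odecE a p.1 p.2‖}
        = ∅ := by
      ext p
      simp [hodec]
    rw [hset]
    simp
  · set B := {x : Fin n → ℝ | t < ‖evalPolyE a x‖} with hB
    have hBmeas : MeasurableSet B := by
      have hcont : Continuous fun x : Fin n → ℝ => evalPolyE a x := by
        unfold evalPolyE
        exact continuous_finset_sum _ fun S _ =>
          (continuous_finset_prod _ fun i _ => continuous_apply i).smul continuous_const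
      exact (isOpen_lt continuous_const hcont.norm).measurableSet
    have hTmp : ∀ j : ℕ, MeasurePreserving
        (fun p : (Fin n → ℝ) × (Fin n → ℝ) =>
          fun i => Real.sin (th k j) * p.1 i + Real.cos (th k j) * p.2 i)
        ((gaussPi n).prod (gaussPi n)) (gaussPi n) :=
      fun j => rotPi n (Real.sin_sq_add_cos_sq (th k j))
    have hsub : {p : (Fin n → ℝ) × (Fin n → ℝ) | 2 * (k:ℝ) * t < ‖odecE a p.1 p.2‖}
        ⊆ ⋃ j ∈ Finset.range (2*k), (fun p : (Fin n → ℝ) × (Fin n → ℝ) =>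
            fun i => Real.sin (th k j) * p.1 i + Real.cos (th k j) * p.2 i) ⁻¹' B := by
      intro p hp
      rw [Set.mem_setOf_eq] at hp
      by_contra hcon
      simp only [Set.mem_iUnion, not_exists, Set.mem_preimage, hB, Set.mem_setOf_eq,
        not_lt, exists_prop, not_and] at hcon
      have hbound : ‖odecE a p.1 p.2‖ ≤ (k:ℝ) * t := by
        rw [decouple hk a ha p.1 p.2]
        calc ‖∑ j ∈ Finset.range (2*k), cf k j •
              evalPolyE a (fun i => Real.sin (th k j) * p.1 i + Real.cos (th k j) * p.2 i)‖
            ≤ ∑ j ∈ Finset.range (2*k), ‖cf k j •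
              evalPolyE a (fun i => Real.sin (th k j) * p.1 i + Real.cos (th k j) * p.2 i)‖ :=
              norm_sum_le _ _
          _ ≤ ∑ j ∈ Finset.range (2*k), |cf k j| * t := by
              refine Finset.sum_le_sum fun j hj => ?_
              rw [norm_smul, Real.norm_eq_abs]
              exact mul_le_mul_of_nonneg_left (hcon j hj) (abs_nonneg _)
          _ = (∑ j ∈ Finset.range (2*k), |cf k j|) * t := by rw [Finset.sum_mul]
          _ = (k:ℝ) * t := by rw [csum hk]
      have hk0 : (0:ℝ) ≤ (k:ℝ) * t := by positivity
      nlinarith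
    calc ((gaussPi n).prod (gaussPi n)) {p | 2 * (k:ℝ) * t < ‖odecE a p.1 p.2‖}
        ≤ ((gaussPi n).prod (gaussPi n)) (⋃ j ∈ Finset.range (2*k),
            (fun p : (Fin n → ℝ) × (Fin n → ℝ) =>
              fun i => Real.sin (th k j) * p.1 i + Real.cos (th k j) * p.2 i) ⁻¹' B) :=
          measure_mono hsub
      _ ≤ ∑ j ∈ Finset.range (2*k), ((gaussPi n).prod (gaussPi n))
            ((fun p : (Fin n → ℝ) × (Fin n → ℝ) =>
              fun i => Real.sin (th k j) * p.1 i + Real.cos (th k j) * p.2 i) ⁻¹' B) :=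
          measure_biUnion_finset_le _ _
      _ = ∑ j ∈ Finset.range (2*k), (gaussPi n) B := by
          refine Finset.sum_congr rfl fun j _ => ?_
          exact (hTmp j).measure_preimage hBmeas.nullMeasurableSet
      _ = (2*k : ℕ) * (gaussPi n) B := by
          rw [Finset.sum_const, Finset.card_range, nsmul_eq_mul]
      _ ≤ ENNReal.ofReal (2 * (k:ℝ)) * (gaussPi n) B := by
          have : ENNReal.ofReal (2 * (k:ℝ)) = ((2*k : ℕ) : ℝ≥0∞) := by
            rw [show 2 * (k:ℝ) = ((2*k : ℕ) : ℝ) by push_cast; ring, ENNReal.ofReal_natCast]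
          rw [this]
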